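/- Let g, g₀ : ℝ → ℂ be measurable with ∫_ℝ ξ²|g₀(ξ)|² dξ < ∞ and ∫_ℝ ξ²|g(ξ)|² dξ < ∞. Suppose ∫_ℝ ξ²|g|² dξ ≤ C̃₀ ∫_ℝ ξ²|g₀|² dξ + C̃₁ with C̃₀ > 0, C̃₁ ≥ 0, and that there exist R > 0 and γ₂ ∈ (0,1) with ∫_{{|ξ| ≥ R}} ξ²|g₀|² dξ ≤ γ₂ ∫_ℝ ξ²|g₀|² dξ. Then for every constant C₁ ≥ C̃₀/(1−γ₂) and every η ≥ R: ∫_{{|ξ| < η}} ξ²|g(ξ)|² dξ ≤ C₁ ∫_{{|ξ| < η}} ξ²|g₀(ξ)|² dξ + C̃₁. -/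
import Mathlib


open MeasureTheory Real

/-- Claim #2 in the proof of the Abstract Interpolation Lemma.
A frequency-localized weighted `L²` bound for `g` in terms of `g₀`, uniform in the
truncation radius `η ≥ R`, from a global weighted bound and a tail hypothesis on `g₀`. -/
theorem localized_weighted_bound (Ct0 Ct1 R γ₂ : ℝ) (hCt0 : 0 < Ct0) (hCt1 : 0 ≤ Ct1)
    (hR : 0 < R) (hγ₂ : γ₂ ∈ Set.Ioo (0 : ℝ) 1) (g g₀ : ℝ → ℂ)
    (hg : Measurable g) (hg₀ : Measurable g₀)
    (hint : Integrable (fun ξ : ℝ => ξ ^ 2 * ‖g ξ‖ ^ 2))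
    (hint₀ : Integrable (fun ξ : ℝ => ξ ^ 2 * ‖g₀ ξ‖ ^ 2))
    (hb : (∫ ξ : ℝ, ξ ^ 2 * ‖g ξ‖ ^ 2) ≤ Ct0 * (∫ ξ : ℝ, ξ ^ 2 * ‖g₀ ξ‖ ^ 2) + Ct1)
    (htail : (∫ ξ in {ξ : ℝ | R ≤ |ξ|}, ξ ^ 2 * ‖g₀ ξ‖ ^ 2) ≤
      γ₂ * ∫ ξ : ℝ, ξ ^ 2 * ‖g₀ ξ‖ ^ 2)
    (C₁ : ℝ) (hC₁ : Ct0 / (1 - γ₂) ≤ C₁) (η : ℝ) (hη : R ≤ η) :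
    (∫ ξ in {ξ : ℝ | |ξ| < η}, ξ ^ 2 * ‖g ξ‖ ^ 2) ≤
      C₁ * (∫ ξ in {ξ : ℝ | |ξ| < η}, ξ ^ 2 * ‖g₀ ξ‖ ^ 2) + Ct1 := by
  obtain ⟨hγ₂0, hγ₂1⟩ := hγ₂
  have h1γ : 0 < 1 - γ₂ := by linarith
  have hnng : ∀ ξ : ℝ, 0 ≤ ξ ^ 2 * ‖g ξ‖ ^ 2 := fun ξ => by positivity
  have hnng₀ : ∀ ξ : ℝ, 0 ≤ ξ ^ 2 * ‖g₀ ξ‖ ^ 2 := fun ξ => by positivity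
  have hmeasR : MeasurableSet {ξ : ℝ | R ≤ |ξ|} :=
    measurableSet_le measurable_const _root_.continuous_abs.measurable
  -- split integral of g₀
  have hsplit : (∫ ξ in {ξ : ℝ | |ξ| < R}, ξ ^ 2 * ‖g₀ ξ‖ ^ 2) +
      (∫ ξ in {ξ : ℝ | R ≤ |ξ|}, ξ ^ 2 * ‖g₀ ξ‖ ^ 2) = ∫ ξ : ℝ, ξ ^ 2 * ‖g₀ ξ‖ ^ 2 := by
    have : {ξ : ℝ | |ξ| < R} = {ξ : ℝ | R ≤ |ξ|}ᶜ := by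
      ext ξ; simp [not_le]
    rw [this, add_comm]
    exact integral_add_compl hmeasR hint₀
  have hmonoset : (∫ ξ in {ξ : ℝ | |ξ| < R}, ξ ^ 2 * ‖g₀ ξ‖ ^ 2) ≤
      ∫ ξ in {ξ : ℝ | |ξ| < η}, ξ ^ 2 * ‖g₀ ξ‖ ^ 2 := by
    apply setIntegral_mono_set hint₀.integrableOn
    · exact Filter.Eventually.of_forall hnng₀
    · exact Filter.Eventually.of_forall fun ξ hξ => lt_of_lt_of_le hξ hη
  have hfull₀ : (1 - γ₂) * (∫ ξ : ℝ, ξ ^ 2 * ‖g₀ ξ‖ ^ 2) ≤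
      ∫ ξ in {ξ : ℝ | |ξ| < η}, ξ ^ 2 * ‖g₀ ξ‖ ^ 2 := by nlinarith
  have hloc₀nn : 0 ≤ ∫ ξ in {ξ : ℝ | |ξ| < η}, ξ ^ 2 * ‖g₀ ξ‖ ^ 2 :=
    setIntegral_nonneg (measurableSet_lt _root_.continuous_abs.measurable measurable_const)
      fun ξ _ => hnng₀ ξ
  have hfull₀' : (∫ ξ : ℝ, ξ ^ 2 * ‖g₀ ξ‖ ^ 2) ≤
      (∫ ξ in {ξ : ℝ | |ξ| < η}, ξ ^ 2 * ‖g₀ ξ‖ ^ 2) / (1 - γ₂) := by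
    rw [le_div_iff₀ h1γ]; linarith [hfull₀]
  have hCnn : 0 ≤ Ct0 / (1 - γ₂) := div_nonneg hCt0.le h1γ.le
  have hlhs : (∫ ξ in {ξ : ℝ | |ξ| < η}, ξ ^ 2 * ‖g ξ‖ ^ 2) ≤ ∫ ξ : ℝ, ξ ^ 2 * ‖g ξ‖ ^ 2 :=
    setIntegral_le_integral hint (Filter.Eventually.of_forall hnng)
  calc (∫ ξ in {ξ : ℝ | |ξ| < η}, ξ ^ 2 * ‖g ξ‖ ^ 2)
      ≤ Ct0 * (∫ ξ : ℝ, ξ ^ 2 * ‖g₀ ξ‖ ^ 2) + Ct1 := le_trans hlhs hb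
    _ ≤ Ct0 * ((∫ ξ in {ξ : ℝ | |ξ| < η}, ξ ^ 2 * ‖g₀ ξ‖ ^ 2) / (1 - γ₂)) + Ct1 := by
        have := mul_le_mul_of_nonneg_left hfull₀' hCt0.le; linarith
    _ ≤ C₁ * (∫ ξ in {ξ : ℝ | |ξ| < η}, ξ ^ 2 * ‖g₀ ξ‖ ^ 2) + Ct1 := by
        have h : Ct0 * ((∫ ξ in {ξ : ℝ | |ξ| < η}, ξ ^ 2 * ‖g₀ ξ‖ ^ 2) / (1 - γ₂)) =
            (Ct0 / (1 - γ₂)) * (∫ ξ in {ξ : ℝ | |ξ| < η}, ξ ^ 2 * ‖g₀ ξ‖ ^ 2) := by ring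
        rw [h]
        have := mul_le_mul_of_nonneg_right hC₁ hloc₀nn
        linarith
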